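/- Let p be a positive integer and let a_1, a_2, a_3 be positive integers with gcd(a_1, a_2, a_3) = 1 such that p does not divide a_i for i = 1, 2, 3 (write a_i = p·k_i + t_i with 1 ≤ t_i ≤ p − 1). Let T_p = {(x_1, x_2, x_3) : 0 ≤ x_1, x_2, x_3 ≤ p − 1, p divides t_1·x_1 + t_2·x_2 + t_3·x_3, and t_1·x_1 + t_2·x_2 + t_3·x_3 ≠ 0}. Then the quotient ⟨a_1, a_2, a_3⟩/p equals the numerical semigroup generated by {a_1, a_2, a_3} together with the numbers (x_1·a_1 + x_2·a_2 + x_3·a_3)/p for (x_1, x_2, x_3) ∈ T_p. -/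

import Mathlib

lemma mem_closure_triple {a b c n : ℕ} :
    n ∈ AddSubmonoid.closure ({a, b, c} : Set ℕ) ↔
      ∃ x y z : ℕ, n = x * a + y * b + z * c := by
  constructor
  · intro h
    induction h using AddSubmonoid.closure_induction with
    | mem g hg =>
      rcases hg with rfl | rfl | rfl
      · exact ⟨1, 0, 0, by ring⟩
      · exact ⟨0, 1, 0, by ring⟩
      · exact ⟨0, 0, 1, by ring⟩
    | zero => exact ⟨0, 0, 0, by ring⟩
    | add u v _ _ hu hv =>
      obtain ⟨x, y, z, rfl⟩ := hu
      obtain ⟨x', y', z', rfl⟩ := hv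
      exact ⟨x + x', y + y', z + z', by ring⟩
  · rintro ⟨x, y, z, rfl⟩
    have ha : a ∈ AddSubmonoid.closure ({a, b, c} : Set ℕ) :=
      AddSubmonoid.subset_closure (by simp)
    have hb : b ∈ AddSubmonoid.closure ({a, b, c} : Set ℕ) :=
      AddSubmonoid.subset_closure (by simp)
    have hc : c ∈ AddSubmonoid.closure ({a, b, c} : Set ℕ) :=
      AddSubmonoid.subset_closure (by simp)
    exact add_mem (add_mem (by simpa [nsmul_eq_mul] using nsmul_mem ha x)
      (by simpa [nsmul_eq_mul] using nsmul_mem hb y))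
      (by simpa [nsmul_eq_mul] using nsmul_mem hc z)

lemma dvd_sum_iff (p r₁ r₂ r₃ a₁ a₂ a₃ : ℕ) :
    p ∣ (r₁ * a₁ + r₂ * a₂ + r₃ * a₃) ↔
      p ∣ ((a₁ % p) * r₁ + (a₂ % p) * r₂ + (a₃ % p) * r₃) := by
  have e₁ : r₁ * a₁ ≡ (a₁ % p) * r₁ [MOD p] := by
    rw [mul_comm]; exact ((Nat.mod_modEq a₁ p).symm).mul_right r₁
  have e₂ : r₂ * a₂ ≡ (a₂ % p) * r₂ [MOD p] := by
    rw [mul_comm]; exact ((Nat.mod_modEq a₂ p).symm).mul_right r₂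
  have e₃ : r₃ * a₃ ≡ (a₃ % p) * r₃ [MOD p] := by
    rw [mul_comm]; exact ((Nat.mod_modEq a₃ p).symm).mul_right r₃
  have h := (e₁.add e₂).add e₃
  rw [← Nat.modEq_zero_iff_dvd, ← Nat.modEq_zero_iff_dvd]
  exact ⟨fun h' => h.symm.trans h', fun h' => h.trans h'⟩

theorem quotient_numerical_semigroup_three_generators
    (p a₁ a₂ a₃ : ℕ) (hp : 0 < p) (h₁ : 0 < a₁) (h₂ : 0 < a₂) (h₃ : 0 < a₃)
    (hgcd : Nat.gcd a₁ (Nat.gcd a₂ a₃) = 1)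
    (hnd₁ : ¬ p ∣ a₁) (hnd₂ : ¬ p ∣ a₂) (hnd₃ : ¬ p ∣ a₃) :
    {m : ℕ | p * m ∈ AddSubmonoid.closure ({a₁, a₂, a₃} : Set ℕ)} =
      ↑(AddSubmonoid.closure
        ({a₁, a₂, a₃} ∪
          {s : ℕ | ∃ x₁ x₂ x₃ : ℕ, x₁ ≤ p - 1 ∧ x₂ ≤ p - 1 ∧ x₃ ≤ p - 1 ∧
            p ∣ ((a₁ % p) * x₁ + (a₂ % p) * x₂ + (a₃ % p) * x₃) ∧
            (a₁ % p) * x₁ + (a₂ % p) * x₂ + (a₃ % p) * x₃ ≠ 0 ∧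
            s = (x₁ * a₁ + x₂ * a₂ + x₃ * a₃) / p})) := by
  ext m
  simp only [Set.mem_setOf_eq, SetLike.mem_coe]
  constructor
  · intro hm
    obtain ⟨x₁, x₂, x₃, hx⟩ := mem_closure_triple.mp hm
    set r₁ := x₁ % p with hr₁
    set r₂ := x₂ % p with hr₂
    set r₃ := x₃ % p with hr₃
    set q₁ := x₁ / p with hq₁
    set q₂ := x₂ / p with hq₂
    set q₃ := x₃ / p with hq₃
    have hx₁ : x₁ = p * q₁ + r₁ := (Nat.div_add_mod x₁ p).symm
    have hx₂ : x₂ = p * q₂ + r₂ := (Nat.div_add_mod x₂ p).symm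
    have hx₃ : x₃ = p * q₃ + r₃ := (Nat.div_add_mod x₃ p).symm
    have hsplit : p * m = p * (q₁ * a₁ + q₂ * a₂ + q₃ * a₃) + (r₁ * a₁ + r₂ * a₂ + r₃ * a₃) := by
      rw [hx, hx₁, hx₂, hx₃]; ring
    have hdvd1 : p ∣ r₁ * a₁ + r₂ * a₂ + r₃ * a₃ := by
      have : r₁ * a₁ + r₂ * a₂ + r₃ * a₃
          = p * m - p * (q₁ * a₁ + q₂ * a₂ + q₃ * a₃) := by omega
      rw [this]
      exact Nat.dvd_sub (dvd_mul_right p m) (dvd_mul_right p _)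
    have hdvd2 : p ∣ (a₁ % p) * r₁ + (a₂ % p) * r₂ + (a₃ % p) * r₃ :=
      (dvd_sum_iff p r₁ r₂ r₃ a₁ a₂ a₃).mp hdvd1
    by_cases hS : (a₁ % p) * r₁ + (a₂ % p) * r₂ + (a₃ % p) * r₃ = 0
    · have ht₁ : a₁ % p ≠ 0 := fun h => hnd₁ (Nat.dvd_of_mod_eq_zero h)
      have ht₂ : a₂ % p ≠ 0 := fun h => hnd₂ (Nat.dvd_of_mod_eq_zero h)
      have ht₃ : a₃ % p ≠ 0 := fun h => hnd₃ (Nat.dvd_of_mod_eq_zero h)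
      have hr1 : r₁ = 0 := by
        rcases Nat.mul_eq_zero.mp (by omega : (a₁ % p) * r₁ = 0) with h | h
        · exact absurd h ht₁
        · exact h
      have hr2 : r₂ = 0 := by
        rcases Nat.mul_eq_zero.mp (by omega : (a₂ % p) * r₂ = 0) with h | h
        · exact absurd h ht₂
        · exact h
      have hr3 : r₃ = 0 := by
        rcases Nat.mul_eq_zero.mp (by omega : (a₃ % p) * r₃ = 0) with h | h
        · exact absurd h ht₃
        · exact h
      have hm' : m = q₁ * a₁ + q₂ * a₂ + q₃ * a₃ := by
        have : p * m = p * (q₁ * a₁ + q₂ * a₂ + q₃ * a₃) := by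
          rw [hsplit, hr1, hr2, hr3]; ring
        exact Nat.eq_of_mul_eq_mul_left hp this
      subst hm'
      refine AddSubmonoid.closure_mono Set.subset_union_left ?_
      exact mem_closure_triple.mpr ⟨q₁, q₂, q₃, rfl⟩
    · set s := (r₁ * a₁ + r₂ * a₂ + r₃ * a₃) / p with hs
      have hps : p * s = r₁ * a₁ + r₂ * a₂ + r₃ * a₃ := Nat.mul_div_cancel' hdvd1
      have hm' : m = q₁ * a₁ + q₂ * a₂ + q₃ * a₃ + s := by
        have : p * m = p * (q₁ * a₁ + q₂ * a₂ + q₃ * a₃ + s) := by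
          rw [hsplit, ← hps]; ring
        exact Nat.eq_of_mul_eq_mul_left hp this
      subst hm'
      have hbound₁ : r₁ ≤ p - 1 := by have := Nat.mod_lt x₁ hp; omega
      have hbound₂ : r₂ ≤ p - 1 := by have := Nat.mod_lt x₂ hp; omega
      have hbound₃ : r₃ ≤ p - 1 := by have := Nat.mod_lt x₃ hp; omega
      refine add_mem ?_ (AddSubmonoid.subset_closure (Set.mem_union_right _
        ⟨r₁, r₂, r₃, hbound₁, hbound₂, hbound₃, hdvd2, hS, rfl⟩))
      refine AddSubmonoid.closure_mono Set.subset_union_left ?_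
      exact mem_closure_triple.mpr ⟨q₁, q₂, q₃, rfl⟩
  · intro hm
    induction hm using AddSubmonoid.closure_induction with
    | mem g hg =>
      rcases hg with hg | hg
      · exact mem_closure_triple.mpr (by
          rcases hg with rfl | rfl | rfl
          · exact ⟨p, 0, 0, by ring⟩
          · exact ⟨0, p, 0, by ring⟩
          · exact ⟨0, 0, p, by ring⟩)
      · obtain ⟨x₁, x₂, x₃, _, _, _, hdvd, _, rfl⟩ := hg
        have hd : p ∣ x₁ * a₁ + x₂ * a₂ + x₃ * a₃ :=
          (dvd_sum_iff p x₁ x₂ x₃ a₁ a₂ a₃).mpr hdvd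
        rw [Nat.mul_div_cancel' hd]
        exact mem_closure_triple.mpr ⟨x₁, x₂, x₃, rfl⟩
    | zero => simpa using (AddSubmonoid.closure ({a₁, a₂, a₃} : Set ℕ)).zero_mem
    | add u v _ _ hu hv =>
      rw [Nat.mul_add]
      exact add_mem hu hv
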